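/- For every α ∈ (0,∞) and all real numbers a, b, one has (|a|^{α-1}a - |b|^{α-1}b)·a ≥ (α/(α+1))·(|a|^{α+1} - |b|^{α+1}). -/

import Mathlib

theorem signed_power_convexity (α : ℝ) (hα : 0 < α) (a b : ℝ) :
    ((|a| ^ (α - 1) * a) - (|b| ^ (α - 1) * b)) * a ≥
      (α / (α + 1)) * (|a| ^ (α + 1) - |b| ^ (α + 1)) := by
  have hα1 : (0:ℝ) < α + 1 := by linarith
  have haa : |a| ^ (α - 1) * a * a = |a| ^ (α + 1) := by
    rcases eq_or_ne a 0 with rfl | ha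
    · simp [Real.zero_rpow (by positivity : α + 1 ≠ 0)]
    · have h2 : a * a = |a| ^ (2:ℝ) := by
        rw [show (2:ℝ) = ((2:ℕ):ℝ) by norm_num, Real.rpow_natCast]
        rw [sq_abs]; ring
      rw [mul_assoc, h2, ← Real.rpow_add (abs_pos.mpr ha)]
      ring_nf
  have hbb : |b| ^ (α - 1) * b * a ≤ |b| ^ α * |a| := by
    calc |b| ^ (α - 1) * b * a ≤ |b| ^ (α - 1) * |b * a| := by
          rw [mul_assoc]
          exact mul_le_mul_of_nonneg_left (le_abs_self _) (Real.rpow_nonneg (abs_nonneg b) _)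
      _ = |b| ^ (α - 1) * |b| * |a| := by rw [abs_mul]; ring
      _ = |b| ^ α * |a| := by
          rcases eq_or_ne b 0 with rfl | hb
          · simp [Real.zero_rpow (ne_of_gt hα)]
          · rw [← Real.rpow_add_one (abs_ne_zero.mpr hb)]
            ring_nf
  have hconj : (α + 1).HolderConjugate ((α + 1) / α) := by
    rw [Real.holderConjugate_iff_eq_conjExponent (by linarith)]
    congr 1
    ring
  have hyoung : |a| * (|b| ^ α) ≤
      |a| ^ (α + 1) / (α + 1) + (|b| ^ α) ^ ((α + 1)/α) / ((α + 1)/α) :=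
    Real.young_inequality_of_nonneg (abs_nonneg a) (Real.rpow_nonneg (abs_nonneg b) α) hconj
  have hsimp : (|b| ^ α) ^ ((α + 1)/α) = |b| ^ (α + 1) := by
    rw [← Real.rpow_mul (abs_nonneg b)]
    congr 1
    field_simp
  rw [hsimp] at hyoung
  have hdiv : |b| ^ (α + 1) / ((α + 1)/α) = α / (α + 1) * |b| ^ (α + 1) := by
    field_simp
  rw [hdiv] at hyoung
  have key : |b| ^ (α - 1) * b * a ≤
      |a| ^ (α + 1) / (α + 1) + α / (α + 1) * |b| ^ (α + 1) := by
    calc |b| ^ (α - 1) * b * a ≤ |b| ^ α * |a| := hbb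
      _ = |a| * |b| ^ α := by ring
      _ ≤ _ := hyoung
  have expand : ((|a| ^ (α - 1) * a) - (|b| ^ (α - 1) * b)) * a
      = |a| ^ (α + 1) - |b| ^ (α - 1) * b * a := by
    rw [sub_mul, haa]
  rw [ge_iff_le, expand]
  have h1 : |a| ^ (α + 1) - (|a| ^ (α + 1) / (α + 1) + α / (α + 1) * |b| ^ (α + 1))
      = α / (α + 1) * (|a| ^ (α + 1) - |b| ^ (α + 1)) := by
    field_simp; ring
  linarith
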